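/- Non-deterministic monoidal automata and regular monoidal grammars define the same class of languages: for every non-deterministic monoidal automaton there is a regular monoidal grammar with the same language, and vice versa. -/

import Mathlib

/-! String diagrams over a single-sorted polygraph: a generator set `G` with
arity and coarity functions. Morphisms of the free strict monoidal category are
terms built from identities, generators, composition and tensor. -/

inductive Diag (G : Type) (ar co : G → ℕ) : ℕ → ℕ → Type
  | id (n : ℕ) : Diag G ar co n n
  | gen (g : G) : Diag G ar co (ar g) (co g)
  | comp {n m k : ℕ} : Diag G ar co n m → Diag G ar co m k → Diag G ar co n k
  | tensor {n m n' m' : ℕ} : Diag G ar co n m → Diag G ar co n' m' → Diag G ar co (n + n') (m + m')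

def Diag.cast {G : Type} {ar co : G → ℕ} {n m n' m' : ℕ} (h1 : n = n') (h2 : m = m')
    (d : Diag G ar co n m) : Diag G ar co n' m' := by subst h1; subst h2; exact d

/-- A non-deterministic monoidal automaton over the single-sorted polygraph `(G, ar, co)`:
a finite set of states `Q`, for each generator `γ : n → m` a transition relation
`Qⁿ → 𝒫(Qᵐ)` (encoded as a set of pairs of state words of the appropriate lengths),
and initial and final state words. -/
structure NDMA (G : Type) (ar co : G → ℕ) where
  Q : Type
  finQ : Finite Q
  δ : G → Set (List Q × List Q)
  δ_len : ∀ g p, p ∈ δ g → p.1.length = ar g ∧ p.2.length = co g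
  init : List Q
  final : List Q

/-- The inductive extension of the transitions of an automaton to all string diagrams:
`Run A s q q'` holds iff `q' ∈ δ̂(q, s)`. -/
inductive NDMA.Run {G : Type} {ar co : G → ℕ} (A : NDMA G ar co) :
    ∀ {n m : ℕ}, Diag G ar co n m → List A.Q → List A.Q → Prop
  | id {n : ℕ} {q : List A.Q} (h : q.length = n) : A.Run (.id n) q q
  | gen {g : G} {q q' : List A.Q} (h : (q, q') ∈ A.δ g) : A.Run (.gen g) q q'
  | comp {n m k} {s : Diag G ar co n m} {t : Diag G ar co m k} {q r p : List A.Q} :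
      A.Run s q r → A.Run t r p → A.Run (s.comp t) q p
  | tensor {n m n' m'} {s : Diag G ar co n m} {t : Diag G ar co n' m'}
      {q r q' r' : List A.Q} :
      A.Run s q r → A.Run t q' r' → A.Run (s.tensor t) (q ++ q') (r ++ r')

/-- The language of a non-deterministic monoidal automaton. -/
def NDMA.language {G : Type} {ar co : G → ℕ} (A : NDMA G ar co) :
    Set ((n : ℕ) × (m : ℕ) × Diag G ar co n m) :=
  {s | A.Run s.2.2 A.init A.final}

/-- A multi-sorted polygraph. -/
structure Polygraph where
  S : Type
  Gen : List S → List S → Type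

/-- String diagrams (morphisms of the free strict monoidal category) over a polygraph. -/
inductive MDiag (P : Polygraph) : List P.S → List P.S → Type
  | id (X : List P.S) : MDiag P X X
  | gen {A B : List P.S} (f : P.Gen A B) : MDiag P A B
  | comp {A B C : List P.S} : MDiag P A B → MDiag P B C → MDiag P A C
  | tensor {A B A' B' : List P.S} : MDiag P A B → MDiag P A' B' → MDiag P (A ++ A') (B ++ B')

/-- A regular monoidal grammar over the single-sorted polygraph `(G, ar, co)`:
a morphism of finite polygraphs from a polygraph of states into `(G, ar, co)`,
together with initial and final sorts. -/
structure RegGrammar (G : Type) (ar co : G → ℕ) where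
  Q : Type
  finQ : Finite Q
  Gen : List Q → List Q → Type
  finGen : Finite ((a : List Q) × (b : List Q) × Gen a b)
  label : ∀ {a b : List Q}, Gen a b → G
  label_ar : ∀ {a b : List Q} (e : Gen a b), ar (label e) = a.length
  label_co : ∀ {a b : List Q} (e : Gen a b), co (label e) = b.length
  init : List Q
  final : List Q

/-- The free monoidal functor induced by a regular monoidal grammar, relabelling
diagrams over the state polygraph to diagrams over `(G, ar, co)`. -/
def RegGrammar.relabel {G : Type} {ar co : G → ℕ} (R : RegGrammar G ar co) :
    ∀ {a b : List R.Q}, MDiag ⟨R.Q, R.Gen⟩ a b → Diag G ar co a.length b.length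
  | _, _, .id X => .id X.length
  | _, _, .gen e => (Diag.gen (R.label e)).cast (R.label_ar e) (R.label_co e)
  | _, _, .comp s t => (R.relabel s).comp (R.relabel t)
  | _, _, .tensor s t =>
      ((R.relabel s).tensor (R.relabel t)).cast
        List.length_append.symm List.length_append.symm

/-- The language of a regular monoidal grammar: the image of the hom-set from the
initial to the final sorts under the free monoidal functor. -/
def RegGrammar.language {G : Type} {ar co : G → ℕ} (R : RegGrammar G ar co) :
    Set ((n : ℕ) × (m : ℕ) × Diag G ar co n m) :=
  {s | ∃ d : MDiag ⟨R.Q, R.Gen⟩ R.init R.final,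
    s = ⟨R.init.length, R.final.length, R.relabel d⟩}

section Aux

variable {G : Type} {ar co : G → ℕ}

lemma Diag.cast_rfl {n m : ℕ} (h1 : n = n) (h2 : m = m) (d : Diag G ar co n m) :
    d.cast h1 h2 = d := rfl

lemma NDMA.Run.cast (A : NDMA G ar co) {n m n' m' : ℕ} (h1 : n = n') (h2 : m = m')
    {s : Diag G ar co n m} {q q' : List A.Q} (h : A.Run s q q') :
    A.Run (s.cast h1 h2) q q' := by subst h1; subst h2; exact h

variable (R : RegGrammar G ar co) (δ : G → Set (List R.Q × List R.Q))
  (δ_len : ∀ g p, p ∈ δ g → p.1.length = ar g ∧ p.2.length = co g)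
  (hδ : ∀ g p, p ∈ δ g ↔ ∃ e : R.Gen p.1 p.2, R.label e = g)

private def mkA : NDMA G ar co := ⟨R.Q, R.finQ, δ, δ_len, R.init, R.final⟩

include hδ in
lemma run_relabel : ∀ {a b : List R.Q} (d : MDiag ⟨R.Q, R.Gen⟩ a b),
    (mkA R δ δ_len).Run (R.relabel d) a b := by
  show ∀ {a b : List (⟨R.Q, R.Gen⟩ : Polygraph).S} (d : MDiag ⟨R.Q, R.Gen⟩ a b),
    (mkA R δ δ_len).Run (R.relabel d) a b
  intro a b d
  induction d with
  | id X => exact NDMA.Run.id rfl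
  | gen e => exact NDMA.Run.cast _ _ _ (NDMA.Run.gen ((hδ _ _).mpr ⟨e, rfl⟩))
  | comp s t ihs iht => exact NDMA.Run.comp ihs iht
  | tensor s t ihs iht => exact NDMA.Run.cast _ _ _ (NDMA.Run.tensor ihs iht)

include hδ in
lemma relabel_run : ∀ {n m : ℕ} {s : Diag G ar co n m} {q q' : List R.Q},
    (mkA R δ δ_len).Run s q q' →
    ∃ (h1 : n = q.length) (h2 : m = q'.length) (d : MDiag ⟨R.Q, R.Gen⟩ q q'),
      R.relabel d = s.cast h1 h2 := by
  show ∀ {n m : ℕ} {s : Diag G ar co n m} {q q' : List (mkA R δ δ_len).Q},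
    (mkA R δ δ_len).Run s q q' →
    ∃ (h1 : n = q.length) (h2 : m = q'.length) (d : MDiag ⟨R.Q, R.Gen⟩ q q'),
      R.relabel d = s.cast h1 h2
  intro n m s q q' h
  induction h with
  | @id n q h =>
      subst h
      refine ⟨rfl, rfl, MDiag.id (P := ⟨R.Q, R.Gen⟩) q, ?_⟩
      rfl
  | @gen g q q' h =>
      obtain ⟨e, he⟩ := (hδ g (q, q')).mp h
      subst he
      refine ⟨R.label_ar e, R.label_co e, .gen e, ?_⟩
      rfl
  | @comp n m k s t q r p h1 h2 ih1 ih2 =>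
      obtain ⟨e1, e2, d1, hd1⟩ := ih1
      obtain ⟨e3, e4, d2, hd2⟩ := ih2
      subst e1; subst e2; subst e4
      refine ⟨rfl, rfl, d1.comp d2, ?_⟩
      show (R.relabel d1).comp (R.relabel d2) = _
      rw [hd1, hd2]; rfl
  | @tensor n m n' m' s t q r q' r' h1 h2 ih1 ih2 =>
      obtain ⟨e1, e2, d1, hd1⟩ := ih1
      obtain ⟨e3, e4, d2, hd2⟩ := ih2
      subst e1; subst e2; subst e3; subst e4
      refine ⟨List.length_append.symm, List.length_append.symm,
        d1.tensor d2, ?_⟩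
      show ((R.relabel d1).tensor (R.relabel d2)).cast _ _ = _
      rw [hd1, hd2]
      rw [Diag.cast_rfl, Diag.cast_rfl]
      rfl

include hδ in
lemma master : (mkA R δ δ_len).language = R.language := by
  ext ⟨n, m, s⟩
  constructor
  · intro h
    obtain ⟨h1, h2, d, hd⟩ := relabel_run R δ δ_len hδ
      (show (mkA R δ δ_len).Run s R.init R.final from h)
    subst h1; subst h2
    exact ⟨d, by rw [hd]; rfl⟩
  · rintro ⟨d, hd⟩
    rw [hd]
    exact run_relabel R δ δ_len hδ d

end Aux

/-- Non-deterministic monoidal automata and regular monoidal grammars define the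
same class of languages: for every non-deterministic monoidal automaton there is a
regular monoidal grammar with the same language, and vice versa. -/
theorem ndma_iff_regGrammar (G : Type) (ar co : G → ℕ) [Finite G] :
    (∀ A : NDMA G ar co, ∃ R : RegGrammar G ar co, A.language = R.language) ∧
    (∀ R : RegGrammar G ar co, ∃ A : NDMA G ar co, R.language = A.language) := by
  constructor
  · intro A
    have _ : Finite A.Q := A.finQ
    have hfin : Finite ((a : List A.Q) × (b : List A.Q) × {g : G // (a, b) ∈ A.δ g}) := by
      have hfib : ∀ g : G, Finite {p : List A.Q × List A.Q // p ∈ A.δ g} := by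
        intro g
        have hsub : {p : List A.Q × List A.Q | p ∈ A.δ g}.Finite := by
          apply Set.Finite.subset
            (Set.Finite.prod (List.finite_length_eq A.Q (ar g))
              (List.finite_length_eq A.Q (co g)))
          intro p hp
          exact ⟨(A.δ_len g p hp).1, (A.δ_len g p hp).2⟩
        exact hsub.to_subtype
      refine Finite.of_injective
        (fun x => (⟨x.2.2.1, ⟨(x.1, x.2.1), x.2.2.2⟩⟩ :
          (g : G) × {p : List A.Q × List A.Q // p ∈ A.δ g})) ?_
      rintro ⟨a, b, g, h⟩ ⟨a', b', g', h'⟩ heq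
      obtain ⟨rfl, heq2⟩ := Sigma.mk.inj_iff.mp heq
      have hval := Subtype.heq_iff_coe_eq (fun _ => Iff.rfl) |>.mp heq2
      simp only [Prod.mk.injEq] at hval
      obtain ⟨rfl, rfl⟩ := hval
      rfl
    let R0 : RegGrammar G ar co := ⟨A.Q, A.finQ, fun a b => {g : G // (a, b) ∈ A.δ g}, hfin,
      fun e => e.1, fun e => (A.δ_len _ _ e.2).1.symm, fun e => (A.δ_len _ _ e.2).2.symm,
      A.init, A.final⟩
    refine ⟨R0, ?_⟩
    exact master R0 A.δ A.δ_len
      (fun g p => ⟨fun h => ⟨⟨g, h⟩, rfl⟩, by rintro ⟨⟨g', h⟩, rfl⟩; exact h⟩)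
  · intro R
    refine ⟨mkA R (fun g => {p | ∃ e : R.Gen p.1 p.2, R.label e = g})
      (fun g p hp => by
        obtain ⟨e, rfl⟩ := hp
        exact ⟨(R.label_ar e).symm, (R.label_co e).symm⟩), ?_⟩
    exact (master R _ _ (fun g p => Iff.rfl)).symm
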